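/- Let n ≥ 1 be an integer. Then the Douglas–Rachford operator T satisfies ‖T^n − P_{Fix T}‖ = c_F^n, where ‖·‖ is the operator norm and c_F is the cosine of the Friedrichs angle between U and V. -/

import Mathlib

noncomputable section

variable {X : Type*} [NormedAddCommGroup X] [InnerProductSpace ℝ X] [CompleteSpace X]

/-- The orthogonal projection onto a closed subspace `W`, as an operator on `X`. -/
noncomputable def proj (W : Submodule ℝ X) [W.HasOrthogonalProjection] : X →L[ℝ] X :=
  W.subtypeL.comp (W.orthogonalProjectionOnto)

instance infHOP (U V : Submodule ℝ X) [CompleteSpace U] [CompleteSpace V] :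
    (U ⊓ V).HasOrthogonalProjection := by
  have hU : IsClosed (U : Set X) := (completeSpace_coe_iff_isComplete.mp ‹_›).isClosed
  have hV : IsClosed (V : Set X) := (completeSpace_coe_iff_isComplete.mp ‹_›).isClosed
  have : CompleteSpace (U ⊓ V : Submodule ℝ X) := (hU.inter hV).completeSpace_coe
  infer_instance

/-- The fixed point set `Fix T = {x | T x = x}` of a continuous linear operator `T`,
as a submodule of `X`. -/
noncomputable def fixedSpace (T : X →L[ℝ] X) : Submodule ℝ X := LinearMap.ker ((T - 1 : X →L[ℝ] X) : X →ₗ[ℝ] X)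

instance fixedSpaceHOP (T : X →L[ℝ] X) : (fixedSpace T).HasOrthogonalProjection := by
  have h : IsClosed ((fixedSpace T : Submodule ℝ X) : Set X) := by
    have : ((fixedSpace T : Submodule ℝ X) : Set X) = {x | T x = x} := by
      ext x; simp [fixedSpace, LinearMap.mem_ker, sub_eq_zero]
    rw [this]
    exact isClosed_eq T.continuous continuous_id
  have : CompleteSpace (fixedSpace T) := h.completeSpace_coe
  infer_instance

/-- The reflector `R_W = 2 P_W − Id` associated with `W`. -/
noncomputable def reflector (W : Submodule ℝ X) [W.HasOrthogonalProjection] : X →L[ℝ] X :=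
  2 • proj W - 1

/-- The Douglas–Rachford operator `T = T_{V,U} = P_V (2 P_U − Id) + Id − P_U`.
(The first argument is `U`, the second is `V`.) -/
noncomputable def drOperator (U V : Submodule ℝ X) [U.HasOrthogonalProjection]
    [V.HasOrthogonalProjection] : X →L[ℝ] X :=
  proj V * (2 • proj U - 1) + 1 - proj U

/-- The cosine of the Friedrichs angle between `U` and `V`. -/
noncomputable def friedrichs (U V : Submodule ℝ X) : ℝ :=
  sSup {c : ℝ | ∃ u v : X, u ∈ U ⊓ (U ⊓ V)ᗮ ∧ v ∈ V ⊓ (U ⊓ V)ᗮ ∧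
    ‖u‖ ≤ 1 ∧ ‖v‖ ≤ 1 ∧ c = inner ℝ u v}

set_option linter.unusedSectionVars false

local notation "⟪" x ", " y "⟫" => @inner ℝ _ _ x y

section basic
variable (K L : Submodule ℝ X) [K.HasOrthogonalProjection] [L.HasOrthogonalProjection]

lemma proj_apply (x : X) : proj K x = (K.orthogonalProjectionOnto x : X) := rfl

lemma proj_mem (x : X) : proj K x ∈ K := (K.orthogonalProjectionOnto x).2

lemma proj_of_mem {x : X} (hx : x ∈ K) : proj K x = x := by
  rw [proj_apply, ← Submodule.starProjection_apply, Submodule.starProjection_eq_self_iff]; exact hx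

lemma proj_of_mem_orthogonal {x : X} (hx : x ∈ Kᗮ) : proj K x = 0 := by
  rw [proj_apply,
    Submodule.orthogonalProjectionOnto_apply_of_mem_orthogonal (K := K) hx]
  rfl

lemma sub_proj_mem (x : X) : x - proj K x ∈ Kᗮ := Submodule.sub_starProjection_mem_orthogonal (K := K) x

lemma inner_proj_left (x y : X) : ⟪proj K x, y⟫ = ⟪x, proj K y⟫ :=
  Submodule.inner_starProjection_left_eq_right (K := K) x y

@[simp] lemma proj_proj (x : X) : proj K (proj K x) = proj K x :=
  proj_of_mem K (proj_mem K x)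

lemma proj_comp_of_le (h : K ≤ L) (x : X) : proj L (proj K x) = proj K x :=
  proj_of_mem L (h (proj_mem K x))

lemma proj_comp_of_le' (h : K ≤ L) (x : X) : proj K (proj L x) = proj K x := by
  have h1 : proj K (x - proj L x) = 0 :=
    proj_of_mem_orthogonal K ((Submodule.orthogonal_le h) (sub_proj_mem L x))
  rw [map_sub] at h1
  exact (sub_eq_zero.mp h1).symm

lemma proj_comp_of_orth (h : K ≤ Lᗮ) (x : X) : proj L (proj K x) = 0 :=
  proj_of_mem_orthogonal L (h (proj_mem K x))

lemma one_sub_proj (x : X) : proj Kᗮ x = x - proj K x := by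
  exact Submodule.starProjection_orthogonal_val (K := K) x

lemma proj_pythagoras (x : X) : ‖proj K x‖ ^ 2 + ‖x - proj K x‖ ^ 2 = ‖x‖ ^ 2 := by
  have h : ⟪proj K x, x - proj K x⟫ = 0 :=
    (Submodule.mem_orthogonal _ _).mp (sub_proj_mem K x) _ (proj_mem K x)
  have h2 := norm_add_sq_real (proj K x) (x - proj K x)
  rw [h, add_sub_cancel] at h2
  linarith

lemma norm_proj_le (x : X) : ‖proj K x‖ ≤ ‖x‖ := by
  have h := proj_pythagoras K x
  have h2 : ‖proj K x‖ ^ 2 ≤ ‖x‖ ^ 2 := by nlinarith [sq_nonneg ‖x - proj K x‖]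
  exact (pow_le_pow_iff_left₀ (norm_nonneg _) (norm_nonneg _) two_ne_zero).mp h2
lemma isSelfAdjoint_proj (K : Submodule ℝ X) [CompleteSpace K] : IsSelfAdjoint (proj K) :=
  isSelfAdjoint_starProjection K

lemma star_proj (K : Submodule ℝ X) [CompleteSpace K] : star (proj K) = proj K :=
  isSelfAdjoint_proj K

instance instCompleteInf (K L : Submodule ℝ X) [CompleteSpace K] [CompleteSpace L] :
    CompleteSpace (K ⊓ L : Submodule ℝ X) := by
  have hK : IsClosed (K : Set X) := (completeSpace_coe_iff_isComplete.mp ‹_›).isClosed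
  have hL : IsClosed (L : Set X) := (completeSpace_coe_iff_isComplete.mp ‹_›).isClosed
  exact (hK.inter hL).completeSpace_coe

section ops
variable (K L : Submodule ℝ X) [K.HasOrthogonalProjection] [L.HasOrthogonalProjection]

lemma proj_mul_of_le (h : K ≤ L) : proj L * proj K = proj K := by
  ext x; exact proj_comp_of_le K L h x

lemma proj_mul_of_le' (h : K ≤ L) : proj K * proj L = proj K := by
  ext x; exact proj_comp_of_le' K L h x

lemma proj_mul_of_orth (h : K ≤ Lᗮ) : proj L * proj K = 0 := by
  ext x; exact proj_comp_of_orth K L h x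

lemma proj_mul_self : proj K * proj K = proj K := by
  ext x; exact proj_proj K x

lemma proj_orthogonal_eq : proj Kᗮ = 1 - proj K := by
  ext x; rw [one_sub_proj]; rfl

end ops
section ringlemmas
variable {R : Type*} [Ring R] {u v : R}

lemma ring_id (hu : u*u = u) (hv : v*v = v) :
    u*v*u + (1-u)*(1-v)*(1-u) = 1 - u - v + u*v + v*u := by
  have h1 : (1-u)*(1-v)*(1-u) = 1 - u - u + u*u - v + v*u + u*v - u*v*u := by noncomm_ring
  rw [hu] at h1
  rw [h1]; abel

lemma ring_id2 (hu : u*u = u) (hv : v*v = v) :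
    (u*v + (1-u)*(1-v)) * (v*u + (1-v)*(1-u)) = 1 - u - v + u*v + v*u := by
  have hv' : (1-v)*(1-v) = 1 - v := by
    have : (1-v)*(1-v) = 1 - v - v + v*v := by noncomm_ring
    rw [this, hv]; abel
  have h0 : v*(1-v) = 0 := by
    have : v*(1-v) = v - v*v := by noncomm_ring
    rw [this, hv, sub_self]
  have h0' : (1-v)*v = 0 := by
    have : (1-v)*v = v - v*v := by noncomm_ring
    rw [this, hv, sub_self]
  have e : (u*v + (1-u)*(1-v)) * (v*u + (1-v)*(1-u))
      = u*(v*v)*u + u*(v*(1-v))*(1-u) + (1-u)*((1-v)*v)*u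
        + (1-u)*((1-v)*(1-v))*(1-u) := by noncomm_ring
  rw [e, hv, h0, h0', hv']
  simp only [mul_zero, zero_mul, add_zero, zero_add]
  exact ring_id hu hv

end ringlemmas

section dr
variable (U V : Submodule ℝ X) [CompleteSpace U] [CompleteSpace V]

lemma drOperator_eq :
    drOperator U V = proj V * proj U + proj Vᗮ * proj Uᗮ := by
  rw [proj_orthogonal_eq, proj_orthogonal_eq]
  unfold drOperator
  noncomm_ring

lemma star_drOperator :
    star (drOperator U V) = proj U * proj V + proj Uᗮ * proj Vᗮ := by
  rw [drOperator_eq, star_add, star_mul, star_mul, star_proj, star_proj, star_proj, star_proj]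

lemma starT_mul_T : star (drOperator U V) * drOperator U V
    = 1 - proj U - proj V + proj U * proj V + proj V * proj U := by
  rw [star_drOperator, drOperator_eq, proj_orthogonal_eq, proj_orthogonal_eq]
  exact ring_id2 (proj_mul_self U) (proj_mul_self V)

lemma T_mul_starT : drOperator U V * star (drOperator U V)
    = 1 - proj V - proj U + proj V * proj U + proj U * proj V := by
  rw [star_drOperator, drOperator_eq, proj_orthogonal_eq, proj_orthogonal_eq]
  exact ring_id2 (proj_mul_self V) (proj_mul_self U)

lemma drOperator_normal :
    star (drOperator U V) * drOperator U V = drOperator U V * star (drOperator U V) := by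
  rw [starT_mul_T, T_mul_starT]; abel

end dr
section fixops
variable (U V : Submodule ℝ X) [CompleteSpace U] [CompleteSpace V]

local notation "pW" => proj (U ⊓ V)
local notation "pW'" => proj (Uᗮ ⊓ Vᗮ)
local notation "T" => drOperator U V

lemma W_le_U : U ⊓ V ≤ U := inf_le_left
lemma W_le_V : U ⊓ V ≤ V := inf_le_right
lemma W'_le_Uo : Uᗮ ⊓ Vᗮ ≤ Uᗮ := inf_le_left
lemma W'_le_Vo : Uᗮ ⊓ Vᗮ ≤ Vᗮ := inf_le_right
lemma W_le_Uoo : U ⊓ V ≤ Uᗮᗮ := le_trans inf_le_left (Submodule.le_orthogonal_orthogonal U)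
lemma W_le_Voo : U ⊓ V ≤ Vᗮᗮ := le_trans inf_le_right (Submodule.le_orthogonal_orthogonal V)
lemma W'_le_Wo : Uᗮ ⊓ Vᗮ ≤ (U ⊓ V)ᗮ :=
  le_trans inf_le_left (Submodule.orthogonal_le inf_le_left)
lemma W_le_W'o : U ⊓ V ≤ (Uᗮ ⊓ Vᗮ)ᗮ :=
  le_trans (W_le_Uoo U V) (Submodule.orthogonal_le inf_le_left)

lemma T_mul_pW : T * pW = pW := by
  rw [drOperator_eq, add_mul, mul_assoc, mul_assoc,
    proj_mul_of_le _ _ (W_le_U U V), proj_mul_of_le _ _ (W_le_V U V),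
    proj_mul_of_orth _ _ (W_le_Uoo U V), mul_zero, add_zero]

lemma T_mul_pW' : T * pW' = pW' := by
  rw [drOperator_eq, add_mul, mul_assoc, mul_assoc,
    proj_mul_of_orth _ _ (W'_le_Uo U V), mul_zero, zero_add,
    proj_mul_of_le _ _ (W'_le_Uo U V), proj_mul_of_le _ _ (W'_le_Vo U V)]

lemma starT_mul_pW : star T * pW = pW := by
  rw [star_drOperator, add_mul, mul_assoc, mul_assoc,
    proj_mul_of_le _ _ (W_le_V U V), proj_mul_of_le _ _ (W_le_U U V),
    proj_mul_of_orth _ _ (W_le_Voo U V), mul_zero, add_zero]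

lemma starT_mul_pW' : star T * pW' = pW' := by
  rw [star_drOperator, add_mul, mul_assoc, mul_assoc,
    proj_mul_of_orth _ _ (W'_le_Vo U V), mul_zero, zero_add,
    proj_mul_of_le _ _ (W'_le_Vo U V), proj_mul_of_le _ _ (W'_le_Uo U V)]

lemma star_P : star (pW + pW' : X →L[ℝ] X) = pW + pW' := by
  rw [star_add, star_proj, star_proj]

lemma T_mul_P : T * (pW + pW') = pW + pW' := by
  rw [mul_add, T_mul_pW, T_mul_pW']

lemma starT_mul_P : star T * (pW + pW') = pW + pW' := by
  rw [mul_add, starT_mul_pW, starT_mul_pW']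

lemma P_mul_T : (pW + pW') * T = pW + pW' := by
  have := congrArg star (starT_mul_P U V)
  rwa [star_mul, star_star, star_P] at this

lemma P_mul_starT : (pW + pW') * star T = pW + pW' := by
  have := congrArg star (T_mul_P U V)
  rwa [star_mul, star_P] at this

lemma P_mul_P : ((pW + pW' : X →L[ℝ] X)) * (pW + pW') = pW + pW' := by
  rw [mul_add, add_mul, add_mul, proj_mul_self, proj_mul_self,
    proj_mul_of_orth _ _ (W'_le_Wo U V), proj_mul_of_orth _ _ (W_le_W'o U V)]
  simp only [add_zero, zero_add]

lemma A_normal : star (T - (pW + pW')) * (T - (pW + pW'))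
    = (T - (pW + pW')) * star (T - (pW + pW')) := by
  rw [star_sub, star_P]
  have h1 : (star T - (pW + pW')) * (T - (pW + pW'))
      = star T * T - star T * (pW + pW') - ((pW + pW') * T - (pW + pW') * (pW + pW')) := by
    noncomm_ring
  have h2 : (T - (pW + pW')) * (star T - (pW + pW'))
      = T * star T - T * (pW + pW') - ((pW + pW') * star T - (pW + pW') * (pW + pW')) := by
    noncomm_ring
  rw [h1, h2, starT_mul_P, P_mul_T, P_mul_P, T_mul_P, P_mul_starT, drOperator_normal]

lemma Tpow_mul_P (n : ℕ) : T ^ n * (pW + pW') = pW + pW' := by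
  induction n with
  | zero => rw [pow_zero, one_mul]
  | succ n ih => rw [pow_succ, mul_assoc, T_mul_P, ih]

lemma Apow_eq (n : ℕ) (hn : 1 ≤ n) :
    (T - (pW + pW')) ^ n = T ^ n - (pW + pW') := by
  induction n with
  | zero => omega
  | succ n ih =>
    rcases Nat.eq_or_lt_of_le hn with h1 | h1
    · rw [← h1, pow_one, pow_one]
    · have hn' : 1 ≤ n := by omega
      rw [pow_succ, ih hn', sub_mul, mul_sub, mul_sub, ← pow_succ, Tpow_mul_P,
        P_mul_T, P_mul_P]
      abel

end fixops

section normpow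
variable {A : Type*} [NormedRing A] [StarRing A] [CStarRing A]

lemma sa_norm_two_pow (s : A) (hs : star s = s) (k : ℕ) : ‖s ^ (2^k)‖ = ‖s‖ ^ (2^k) := by
  induction k with
  | zero => simp
  | succ k ih =>
    have h2 : (2:ℕ)^(k+1) = 2^k + 2^k := by ring
    have hstar : star (s ^ (2^k)) = s ^ (2^k) := by rw [star_pow, hs]
    rw [h2, pow_add]
    nth_rewrite 1 [← hstar]
    rw [CStarRing.norm_star_mul_self, ih]
    ring

lemma sa_norm_pow (s : A) (hs : star s = s) (n : ℕ) (hn : 1 ≤ n) : ‖s ^ n‖ = ‖s‖ ^ n := by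
  rcases eq_or_lt_of_le (norm_nonneg s) with h0 | h0
  · have hz : s = 0 := norm_eq_zero.mp h0.symm
    simp [hz, zero_pow (Nat.one_le_iff_ne_zero.mp hn)]
  · have hlt : n < 2 ^ n := Nat.lt_two_pow_self
    have hm : 2 ^ n = n + (2 ^ n - n) := by omega
    have hm1 : 1 ≤ 2 ^ n - n := by omega
    have key : ‖s‖ ^ (2^n) ≤ ‖s ^ n‖ * ‖s‖ ^ (2^n - n) := by
      calc ‖s‖ ^ (2^n) = ‖s ^ (2^n)‖ := (sa_norm_two_pow s hs n).symm
        _ = ‖s ^ n * s ^ (2^n - n)‖ := by rw [← pow_add, ← hm]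
        _ ≤ ‖s ^ n‖ * ‖s ^ (2^n - n)‖ := norm_mul_le _ _
        _ ≤ ‖s ^ n‖ * ‖s‖ ^ (2^n - n) := by
            exact mul_le_mul_of_nonneg_left (norm_pow_le' s hm1) (norm_nonneg _)
    have hle : ‖s‖ ^ n ≤ ‖s ^ n‖ := by
      have hpos : (0:ℝ) < ‖s‖ ^ (2^n - n) := pow_pos h0 _
      have key2 : ‖s‖ ^ n * ‖s‖ ^ (2^n - n) ≤ ‖s ^ n‖ * ‖s‖ ^ (2^n - n) := by
        calc ‖s‖ ^ n * ‖s‖ ^ (2^n - n) = ‖s‖ ^ (2^n) := by rw [← pow_add]; congr 1; omega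
          _ ≤ ‖s ^ n‖ * ‖s‖ ^ (2^n - n) := key
      exact le_of_mul_le_mul_right key2 hpos
    exact le_antisymm (norm_pow_le' s hn) hle

end normpow
lemma normal_norm_pow {A : Type*} [NormedRing A] [StarRing A] [CStarRing A]
    (a : A) (h : star a * a = a * star a) (n : ℕ) (hn : 1 ≤ n) : ‖a ^ n‖ = ‖a‖ ^ n := by
  have hsa : star (star a * a) = star a * a := by rw [star_mul, star_star]
  have hcomm : Commute (star a) a := h
  have h1 : ‖a ^ n‖ ^ 2 = (‖a‖ ^ 2) ^ n := by
    calc ‖a ^ n‖ ^ 2 = ‖star (a ^ n) * a ^ n‖ := by rw [CStarRing.norm_star_mul_self, sq]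
      _ = ‖(star a * a) ^ n‖ := by rw [star_pow, ← hcomm.mul_pow]
      _ = ‖star a * a‖ ^ n := sa_norm_pow _ hsa n hn
      _ = (‖a‖ ^ 2) ^ n := by rw [CStarRing.norm_star_mul_self, sq]
  have h2 : ‖a ^ n‖ ^ 2 = (‖a‖ ^ n) ^ 2 := by rw [h1, ← pow_mul, ← pow_mul, Nat.mul_comm]
  calc ‖a ^ n‖ = Real.sqrt (‖a ^ n‖ ^ 2) := (Real.sqrt_sq (norm_nonneg _)).symm
    _ = Real.sqrt ((‖a‖ ^ n) ^ 2) := by rw [h2]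
    _ = ‖a‖ ^ n := Real.sqrt_sq (pow_nonneg (norm_nonneg _) _)

section fried
variable (U V : Submodule ℝ X) [CompleteSpace U] [CompleteSpace V]

lemma zero_mem_friedrichs_set : (0:ℝ) ∈ {c : ℝ | ∃ u v : X, u ∈ U ⊓ (U ⊓ V)ᗮ ∧
    v ∈ V ⊓ (U ⊓ V)ᗮ ∧ ‖u‖ ≤ 1 ∧ ‖v‖ ≤ 1 ∧ c = inner ℝ u v} :=
  ⟨0, 0, zero_mem _, zero_mem _, by simp, by simp, by simp⟩

lemma friedrichs_bddAbove : BddAbove {c : ℝ | ∃ u v : X, u ∈ U ⊓ (U ⊓ V)ᗮ ∧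
    v ∈ V ⊓ (U ⊓ V)ᗮ ∧ ‖u‖ ≤ 1 ∧ ‖v‖ ≤ 1 ∧ c = inner ℝ u v} := by
  refine ⟨1, ?_⟩
  rintro r ⟨u, v, _, _, hnu, hnv, rfl⟩
  nlinarith [real_inner_le_norm u v, norm_nonneg u, norm_nonneg v]

lemma friedrichs_nonneg : 0 ≤ friedrichs U V :=
  le_csSup (friedrichs_bddAbove U V) (zero_mem_friedrichs_set U V)

lemma friedrichs_le_one : friedrichs U V ≤ 1 := by
  apply Real.sSup_le _ zero_le_one
  rintro r ⟨u, v, _, _, hnu, hnv, rfl⟩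
  nlinarith [real_inner_le_norm u v, norm_nonneg u, norm_nonneg v]

lemma friedrichs_bound {u v : X} (hu : u ∈ U ⊓ (U ⊓ V)ᗮ) (hv : v ∈ V ⊓ (U ⊓ V)ᗮ) :
    (inner ℝ u v : ℝ) ≤ friedrichs U V * (‖u‖ * ‖v‖) := by
  by_cases hu0 : u = 0
  · simp [hu0]
  by_cases hv0 : v = 0
  · simp [hv0]
  have hpu : (0:ℝ) < ‖u‖ := norm_pos_iff.mpr hu0
  have hpv : (0:ℝ) < ‖v‖ := norm_pos_iff.mpr hv0
  have hmem : (inner ℝ (‖u‖⁻¹ • u) (‖v‖⁻¹ • v) : ℝ) ∈ {c : ℝ | ∃ u v : X, u ∈ U ⊓ (U ⊓ V)ᗮ ∧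
      v ∈ V ⊓ (U ⊓ V)ᗮ ∧ ‖u‖ ≤ 1 ∧ ‖v‖ ≤ 1 ∧ c = inner ℝ u v} := by
    refine ⟨_, _, Submodule.smul_mem _ _ hu, Submodule.smul_mem _ _ hv, ?_, ?_, rfl⟩
    · rw [norm_smul, norm_inv, norm_norm, inv_mul_cancel₀ hpu.ne']
    · rw [norm_smul, norm_inv, norm_norm, inv_mul_cancel₀ hpv.ne']
  have hle := le_csSup (friedrichs_bddAbove U V) hmem
  rw [real_inner_smul_left, real_inner_smul_right] at hle
  have h2 : (inner ℝ u v : ℝ) = (‖u‖ * ‖v‖) * (‖u‖⁻¹ * (‖v‖⁻¹ * inner ℝ u v)) := by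
    field_simp
  rw [h2]
  calc (‖u‖ * ‖v‖) * (‖u‖⁻¹ * (‖v‖⁻¹ * inner ℝ u v))
      ≤ (‖u‖ * ‖v‖) * friedrichs U V :=
        mul_le_mul_of_nonneg_left hle (by positivity)
    _ = friedrichs U V * (‖u‖ * ‖v‖) := by ring

lemma norm_projN'_le {n : X} (hn : n ∈ U ⊓ (U ⊓ V)ᗮ) :
    ‖proj (V ⊓ (U ⊓ V)ᗮ) n‖ ≤ friedrichs U V * ‖n‖ := by
  set q := proj (V ⊓ (U ⊓ V)ᗮ) n with hq
  have hqm : q ∈ V ⊓ (U ⊓ V)ᗮ := proj_mem _ n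
  have h1 : ‖q‖ ^ 2 = (inner ℝ n q : ℝ) := by
    rw [← real_inner_self_eq_norm_sq]
    calc (inner ℝ q q : ℝ) = inner ℝ n (proj (V ⊓ (U ⊓ V)ᗮ) q) := by
          rw [hq]; exact inner_proj_left _ n q
      _ = inner ℝ n q := by rw [proj_of_mem _ hqm]
  have h2 := friedrichs_bound U V hn hqm
  by_cases hq0 : ‖q‖ = 0
  · rw [hq0]; exact mul_nonneg (friedrichs_nonneg U V) (norm_nonneg n)
  · have hqpos : (0:ℝ) < ‖q‖ := lt_of_le_of_ne (norm_nonneg q) (Ne.symm hq0)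
    nlinarith [h1, h2]

lemma proj_V_eq_projN' {n : X} (hn : n ∈ (U ⊓ V)ᗮ) :
    proj (V ⊓ (U ⊓ V)ᗮ) n = proj V n := by
  have hmem : proj V n ∈ V ⊓ (U ⊓ V)ᗮ := by
    refine ⟨proj_mem V n, ?_⟩
    intro w hw
    calc (inner ℝ w (proj V n) : ℝ) = inner ℝ (proj V w) n := (inner_proj_left V w n).symm
      _ = inner ℝ w n := by rw [proj_of_mem V (W_le_V U V hw)]
      _ = 0 := hn w hw
  have horth : n - proj V n ∈ (V ⊓ (U ⊓ V)ᗮ)ᗮ :=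
    Submodule.orthogonal_le inf_le_left (sub_proj_mem V n)
  exact Submodule.eq_starProjection_of_mem_orthogonal hmem horth

lemma norm_projVorth_ge {n : X} (hn : n ∈ U ⊓ (U ⊓ V)ᗮ) :
    (1 - friedrichs U V ^ 2) * ‖n‖ ^ 2 ≤ ‖proj Vᗮ n‖ ^ 2 := by
  have h1 : ‖proj V n‖ ≤ friedrichs U V * ‖n‖ := by
    rw [← proj_V_eq_projN' U V hn.2]
    exact norm_projN'_le U V hn
  have h2 := proj_pythagoras V n
  rw [← one_sub_proj] at h2
  nlinarith [norm_nonneg (proj V n), norm_nonneg n, friedrichs_nonneg U V]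

end fried
section dualsec
variable (U V : Submodule ℝ X) [CompleteSpace U] [CompleteSpace V]

lemma dual_inner_le :
    ∀ y ∈ Uᗮ ⊓ (Uᗮ ⊓ Vᗮ)ᗮ, ∀ z ∈ Vᗮ ⊓ (Uᗮ ⊓ Vᗮ)ᗮ,
      (inner ℝ y z : ℝ) ≤ friedrichs U V * (‖y‖ * ‖z‖) := by
  intro y hy z hz
  set c := friedrichs U V with hc
  have hc0 : 0 ≤ c := friedrichs_nonneg U V
  have hc1 : c ≤ 1 := friedrichs_le_one U V
  by_cases hceq : 1 ≤ c
  · have : c = 1 := le_antisymm hc1 hceq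
    rw [this, one_mul]
    exact real_inner_le_norm y z
  push_neg at hceq
  set δ : ℝ := Real.sqrt (1 - c ^ 2) with hδ
  have hδsq : δ ^ 2 = 1 - c ^ 2 := Real.sq_sqrt (by nlinarith)
  have hδpos : 0 < δ := Real.sqrt_pos.mpr (by nlinarith)
  -- lower bound for proj Vᗮ on N
  have hlow : ∀ w : X, w ∈ U ⊓ (U ⊓ V)ᗮ → δ * ‖w‖ ≤ ‖proj Vᗮ w‖ := by
    intro w hw
    have h1 := norm_projVorth_ge U V hw
    have h2 : (δ * ‖w‖) ^ 2 ≤ ‖proj Vᗮ w‖ ^ 2 := by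
      rw [mul_pow, hδsq]; exact h1
    exact (pow_le_pow_iff_left₀ (by positivity) (norm_nonneg _) two_ne_zero).mp h2
  -- the image of N under proj Vᗮ
  set J : Submodule ℝ X := Submodule.map (proj Vᗮ : X →ₗ[ℝ] X) (U ⊓ (U ⊓ V)ᗮ) with hJ
  have hJcomplete : IsComplete (J : Set X) := by
    set f : (U ⊓ (U ⊓ V)ᗮ : Submodule ℝ X) → X := fun n => proj Vᗮ (n : X) with hf
    have hfu : UniformContinuous f :=
      (proj Vᗮ).uniformContinuous.comp uniformContinuous_subtype_val
    have hanti : AntilipschitzWith (⟨δ, hδpos.le⟩ : NNReal)⁻¹ f := by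
      apply AntilipschitzWith.of_le_mul_dist
      intro a b
      have hab : ((a : X) - b) ∈ U ⊓ (U ⊓ V)ᗮ := sub_mem a.2 b.2
      have := hlow _ hab
      rw [Subtype.dist_eq, dist_eq_norm, dist_eq_norm]
      have hfab : f a - f b = proj Vᗮ ((a : X) - b) := by rw [hf]; simp [map_sub]
      rw [← hfab] at this
      change ‖(a:X) - (b:X)‖ ≤ δ⁻¹ * ‖f a - f b‖
      have : δ * ‖(a:X) - (b:X)‖ ≤ ‖f a - f b‖ := this
      calc ‖(a:X) - (b:X)‖ = δ⁻¹ * (δ * ‖(a:X) - (b:X)‖) := by field_simp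
        _ ≤ δ⁻¹ * ‖f a - f b‖ := by
            exact mul_le_mul_of_nonneg_left this (by positivity)
    have hrange : Set.range f = (J : Set X) := by
      ext w
      constructor
      · rintro ⟨n, rfl⟩
        exact ⟨(n : X), n.2, rfl⟩
      · rintro ⟨n, hn, rfl⟩
        exact ⟨⟨n, hn⟩, rfl⟩
    rw [← hrange]
    exact hanti.isComplete_range hfu
  haveI : CompleteSpace (J : Submodule ℝ X) := hJcomplete.completeSpace_coe
  have hJle : J ≤ Vᗮ ⊓ (Uᗮ ⊓ Vᗮ)ᗮ := by
    rintro _ ⟨n, hn, rfl⟩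
    refine ⟨proj_mem _ n, ?_⟩
    intro w' hw'
    calc (inner ℝ w' (proj Vᗮ n) : ℝ) = inner ℝ (proj Vᗮ w') n := (inner_proj_left Vᗮ w' n).symm
      _ = inner ℝ w' n := by rw [proj_of_mem Vᗮ (W'_le_Vo U V hw')]
      _ = 0 := by
          rw [real_inner_comm]
          exact (W'_le_Uo U V hw') n hn.1
  -- z is in the image J
  obtain ⟨nz, hnz, hnzeq⟩ : ∃ n, n ∈ U ⊓ (U ⊓ V)ᗮ ∧ proj Vᗮ n = z := by
    set z' := z - proj J z with hz'
    have hz'J : z' ∈ Jᗮ := sub_proj_mem J z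
    have hz'M : z' ∈ Vᗮ ⊓ (Uᗮ ⊓ Vᗮ)ᗮ := sub_mem hz (hJle (proj_mem J z))
    have hz'N : ∀ n ∈ U ⊓ (U ⊓ V)ᗮ, (inner ℝ z' n : ℝ) = 0 := by
      intro n hn
      have hdec : n = proj V n + proj Vᗮ n := by rw [one_sub_proj]; abel
      rw [hdec, inner_add_right]
      have e1 : (inner ℝ z' (proj V n) : ℝ) = 0 := by
        rw [real_inner_comm]
        exact hz'M.1 _ (proj_mem V n)
      have e2 : (inner ℝ z' (proj Vᗮ n) : ℝ) = 0 := by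
        rw [real_inner_comm]
        exact hz'J _ ⟨n, hn, rfl⟩
      rw [e1, e2, add_zero]
    have hz'U : ∀ u ∈ U, (inner ℝ z' u : ℝ) = 0 := by
      intro u hu
      have hdec : u = proj (U ⊓ V) u + (u - proj (U ⊓ V) u) := by abel
      rw [hdec, inner_add_right]
      have e1 : (inner ℝ z' (proj (U ⊓ V) u) : ℝ) = 0 := by
        rw [real_inner_comm]
        exact hz'M.1 _ (W_le_V U V (proj_mem _ u))
      have e2 : (inner ℝ z' (u - proj (U ⊓ V) u) : ℝ) = 0 :=
        hz'N _ ⟨sub_mem hu (W_le_U U V (proj_mem _ u)), sub_proj_mem _ u⟩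
      rw [e1, e2, add_zero]
    have hz'W' : z' ∈ Uᗮ ⊓ Vᗮ := by
      constructor
      · intro u hu; rw [real_inner_comm]; exact hz'U u hu
      · exact hz'M.1
    have hz'0 : z' = 0 := by
      have := hz'M.2 z' hz'W'
      rwa [real_inner_self_eq_norm_sq, pow_eq_zero_iff two_ne_zero, norm_eq_zero] at this
    have : z = proj J z := by
      rw [hz'] at hz'0
      exact sub_eq_zero.mp hz'0
    rcases (proj_mem J z : proj J z ∈ J) with ⟨n, hn, hneq⟩
    exact ⟨n, hn, by exact hneq.trans this.symm⟩
  -- bound ‖proj Uᗮ z‖ ≤ c ‖z‖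
  have hPUorth : ‖proj Uᗮ z‖ ≤ c * ‖z‖ := by
    by_cases hz0 : z = 0
    · simp [hz0, mul_nonneg hc0]
    have hzz : (inner ℝ z nz : ℝ) = ‖z‖ ^ 2 := by
      rw [← hnzeq]
      calc (inner ℝ (proj Vᗮ nz) nz : ℝ) = inner ℝ nz (proj Vᗮ nz) := real_inner_comm _ _
        _ = inner ℝ (proj Vᗮ nz) (proj Vᗮ nz) := by
            rw [inner_proj_left, proj_proj]
        _ = ‖proj Vᗮ nz‖ ^ 2 := real_inner_self_eq_norm_sq _
    have hδn : δ * ‖nz‖ ≤ ‖z‖ := by rw [← hnzeq]; exact hlow nz hnz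
    have hPU2 : ‖z‖ ^ 2 ≤ ‖proj U z‖ * ‖nz‖ := by
      calc ‖z‖ ^ 2 = (inner ℝ z nz : ℝ) := hzz.symm
        _ = inner ℝ z (proj U nz) := by rw [proj_of_mem U hnz.1]
        _ = inner ℝ (proj U z) nz := (inner_proj_left U z nz).symm
        _ ≤ ‖proj U z‖ * ‖nz‖ := real_inner_le_norm _ _
    have hzpos : (0:ℝ) < ‖z‖ := norm_pos_iff.mpr hz0
    have hnzpos : (0:ℝ) < ‖nz‖ := by
      rcases eq_or_lt_of_le (norm_nonneg nz) with h | h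
      · exfalso
        have : nz = 0 := norm_eq_zero.mp h.symm
        rw [this, map_zero] at hnzeq
        exact hz0 hnzeq.symm
      · exact h
    have hδz : δ * ‖z‖ ≤ ‖proj U z‖ := by
      have h3 : δ * ‖z‖ ^ 2 ≤ ‖proj U z‖ * ‖z‖ := by
        calc δ * ‖z‖ ^ 2 ≤ δ * (‖proj U z‖ * ‖nz‖) := by
              exact mul_le_mul_of_nonneg_left hPU2 hδpos.le
          _ = ‖proj U z‖ * (δ * ‖nz‖) := by ring
          _ ≤ ‖proj U z‖ * ‖z‖ := by
              exact mul_le_mul_of_nonneg_left hδn (norm_nonneg _)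
      have := mul_le_mul_of_nonneg_right h3 (le_of_lt (inv_pos.mpr hzpos))
      calc δ * ‖z‖ = δ * ‖z‖ ^ 2 * ‖z‖⁻¹ := by field_simp
        _ ≤ ‖proj U z‖ * ‖z‖ * ‖z‖⁻¹ := this
        _ = ‖proj U z‖ := by field_simp
    have hpyth := proj_pythagoras U z
    rw [← one_sub_proj] at hpyth
    have hsq : (δ * ‖z‖) ^ 2 ≤ ‖proj U z‖ ^ 2 := pow_le_pow_left₀ (by positivity) hδz 2
    have h4 : ‖proj Uᗮ z‖ ^ 2 ≤ (c * ‖z‖) ^ 2 := by nlinarith [hsq, hδsq, hpyth]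
    exact (pow_le_pow_iff_left₀ (norm_nonneg _) (by positivity) two_ne_zero).mp h4
  -- final estimate
  have hyU : proj Uᗮ y = y := proj_of_mem Uᗮ hy.1
  calc (inner ℝ y z : ℝ) = inner ℝ (proj Uᗮ y) z := by rw [hyU]
    _ = inner ℝ y (proj Uᗮ z) := inner_proj_left Uᗮ y z
    _ ≤ ‖y‖ * ‖proj Uᗮ z‖ := real_inner_le_norm _ _
    _ ≤ ‖y‖ * (c * ‖z‖) := mul_le_mul_of_nonneg_left hPUorth (norm_nonneg _)
    _ = c * (‖y‖ * ‖z‖) := by ring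

end dualsec
section assembly
variable (U V : Submodule ℝ X) [CompleteSpace U] [CompleteSpace V]

lemma proj_inf_orth (K L : Submodule ℝ X) [CompleteSpace K] [CompleteSpace L]
    (h : L ≤ K) (x : X) : proj (K ⊓ Lᗮ) x = proj K x - proj L x := by
  apply Submodule.eq_starProjection_of_mem_orthogonal
  · refine ⟨sub_mem (proj_mem K x) (h (proj_mem L x)), ?_⟩
    intro w hw
    rw [inner_sub_right]
    have a1 : (inner ℝ w (proj K x) : ℝ) = inner ℝ w x := by
      rw [← inner_proj_left, proj_of_mem K (h hw)]
    have a2 : (inner ℝ w (proj L x) : ℝ) = inner ℝ w x := by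
      rw [← inner_proj_left, proj_of_mem L hw]
    rw [a1, a2, sub_self]
  · intro w hw
    have hsplit : x - (proj K x - proj L x) = (x - proj K x) + proj L x := by abel
    rw [hsplit, inner_add_right]
    have h1 : (inner ℝ w (x - proj K x) : ℝ) = 0 := sub_proj_mem K x w hw.1
    have h2 : (inner ℝ w (proj L x) : ℝ) = 0 := by
      rw [← inner_proj_left, proj_of_mem_orthogonal L hw.2, inner_zero_left]
    rw [h1, h2, add_zero]

lemma A_apply (x : X) :
    (drOperator U V - (proj (U ⊓ V) + proj (Uᗮ ⊓ Vᗮ))) x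
      = proj (V ⊓ (U ⊓ V)ᗮ) (proj (U ⊓ (U ⊓ V)ᗮ) x)
        + proj (Vᗮ ⊓ (Uᗮ ⊓ Vᗮ)ᗮ) (proj (Uᗮ ⊓ (Uᗮ ⊓ Vᗮ)ᗮ) x) := by
  rw [proj_inf_orth U (U ⊓ V) (W_le_U U V) x,
    proj_inf_orth Uᗮ (Uᗮ ⊓ Vᗮ) (W'_le_Uo U V) x,
    proj_inf_orth V (U ⊓ V) (W_le_V U V),
    proj_inf_orth Vᗮ (Uᗮ ⊓ Vᗮ) (W'_le_Vo U V),
    ContinuousLinearMap.sub_apply, ContinuousLinearMap.add_apply, drOperator_eq]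
  simp only [ContinuousLinearMap.add_apply, ContinuousLinearMap.mul_apply, map_sub]
  rw [proj_comp_of_le (U ⊓ V) V (W_le_V U V), proj_comp_of_le' (U ⊓ V) U (W_le_U U V),
    proj_comp_of_le (Uᗮ ⊓ Vᗮ) Vᗮ (W'_le_Vo U V),
    proj_comp_of_le' (Uᗮ ⊓ Vᗮ) Uᗮ (W'_le_Uo U V), proj_proj, proj_proj]
  abel

lemma norm_projM'_le {m : X} (hm : m ∈ Uᗮ ⊓ (Uᗮ ⊓ Vᗮ)ᗮ) :
    ‖proj (Vᗮ ⊓ (Uᗮ ⊓ Vᗮ)ᗮ) m‖ ≤ friedrichs U V * ‖m‖ := by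
  set q := proj (Vᗮ ⊓ (Uᗮ ⊓ Vᗮ)ᗮ) m with hq
  have hqm : q ∈ Vᗮ ⊓ (Uᗮ ⊓ Vᗮ)ᗮ := proj_mem _ m
  have h1 : ‖q‖ ^ 2 = (inner ℝ m q : ℝ) := by
    rw [← real_inner_self_eq_norm_sq]
    calc (inner ℝ q q : ℝ) = inner ℝ m (proj (Vᗮ ⊓ (Uᗮ ⊓ Vᗮ)ᗮ) q) := by
          rw [hq]; exact inner_proj_left _ m q
      _ = inner ℝ m q := by rw [proj_of_mem _ hqm]
  have h2 := dual_inner_le U V m hm q hqm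
  by_cases hq0 : ‖q‖ = 0
  · rw [hq0]; exact mul_nonneg (friedrichs_nonneg U V) (norm_nonneg m)
  · have hqpos : (0:ℝ) < ‖q‖ := lt_of_le_of_ne (norm_nonneg q) (Ne.symm hq0)
    nlinarith [h1, h2]

lemma norm_A : ‖drOperator U V - (proj (U ⊓ V) + proj (Uᗮ ⊓ Vᗮ))‖ = friedrichs U V := by
  apply le_antisymm
  · apply ContinuousLinearMap.opNorm_le_bound _ (friedrichs_nonneg U V)
    intro x
    rw [A_apply]
    set a := proj (V ⊓ (U ⊓ V)ᗮ) (proj (U ⊓ (U ⊓ V)ᗮ) x) with ha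
    set b := proj (Vᗮ ⊓ (Uᗮ ⊓ Vᗮ)ᗮ) (proj (Uᗮ ⊓ (Uᗮ ⊓ Vᗮ)ᗮ) x) with hb
    have horth : (inner ℝ a b : ℝ) = 0 := (proj_mem _ _ : b ∈ _).1 a (proj_mem _ _ : a ∈ _).1
    have habsq : ‖a + b‖ ^ 2 = ‖a‖ ^ 2 + ‖b‖ ^ 2 := by
      rw [norm_add_sq_real, horth]; ring
    have hA : ‖a‖ ≤ friedrichs U V * ‖proj (U ⊓ (U ⊓ V)ᗮ) x‖ :=
      norm_projN'_le U V (proj_mem _ x)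
    have hB : ‖b‖ ≤ friedrichs U V * ‖proj (Uᗮ ⊓ (Uᗮ ⊓ Vᗮ)ᗮ) x‖ :=
      norm_projM'_le U V (proj_mem _ x)
    have hNx : ‖proj (U ⊓ (U ⊓ V)ᗮ) x‖ ≤ ‖proj U x‖ := by
      rw [← proj_comp_of_le' (U ⊓ (U ⊓ V)ᗮ) U inf_le_left x]
      exact norm_proj_le _ _
    have hMx : ‖proj (Uᗮ ⊓ (Uᗮ ⊓ Vᗮ)ᗮ) x‖ ≤ ‖proj Uᗮ x‖ := by
      rw [← proj_comp_of_le' (Uᗮ ⊓ (Uᗮ ⊓ Vᗮ)ᗮ) Uᗮ inf_le_left x]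
      exact norm_proj_le _ _
    have hpyth : ‖proj U x‖ ^ 2 + ‖proj Uᗮ x‖ ^ 2 = ‖x‖ ^ 2 := by
      have := proj_pythagoras U x; rwa [← one_sub_proj] at this
    have hc0 := friedrichs_nonneg U V
    have h2 : ‖a + b‖ ^ 2 ≤ (friedrichs U V * ‖x‖) ^ 2 := by
      have sqa : ‖a‖ ^ 2 ≤ (friedrichs U V * ‖proj (U ⊓ (U ⊓ V)ᗮ) x‖) ^ 2 :=
        pow_le_pow_left₀ (norm_nonneg _) hA 2
      have sqb : ‖b‖ ^ 2 ≤ (friedrichs U V * ‖proj (Uᗮ ⊓ (Uᗮ ⊓ Vᗮ)ᗮ) x‖) ^ 2 :=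
        pow_le_pow_left₀ (norm_nonneg _) hB 2
      have sqN : ‖proj (U ⊓ (U ⊓ V)ᗮ) x‖ ^ 2 ≤ ‖proj U x‖ ^ 2 :=
        pow_le_pow_left₀ (norm_nonneg _) hNx 2
      have sqM : ‖proj (Uᗮ ⊓ (Uᗮ ⊓ Vᗮ)ᗮ) x‖ ^ 2 ≤ ‖proj Uᗮ x‖ ^ 2 :=
        pow_le_pow_left₀ (norm_nonneg _) hMx 2
      nlinarith [sq_nonneg (friedrichs U V)]
    have := (pow_le_pow_iff_left₀ (norm_nonneg _) (by positivity) two_ne_zero).mp h2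
    exact this
  · apply Real.sSup_le _ (norm_nonneg _)
    rintro r ⟨u₀, v₀, hu, hv, hnu, hnv, rfl⟩
    have huM : u₀ ∈ (Uᗮ ⊓ (Uᗮ ⊓ Vᗮ)ᗮ)ᗮ := by
      intro m hm
      rw [real_inner_comm]
      exact hm.1 u₀ hu.1
    have hAu : (drOperator U V - (proj (U ⊓ V) + proj (Uᗮ ⊓ Vᗮ))) u₀
        = proj (V ⊓ (U ⊓ V)ᗮ) u₀ := by
      rw [A_apply, proj_of_mem _ hu, proj_of_mem_orthogonal _ huM, map_zero, add_zero]
    have h5 : (inner ℝ (proj (V ⊓ (U ⊓ V)ᗮ) u₀) v₀ : ℝ) = inner ℝ u₀ v₀ := by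
      rw [inner_proj_left, proj_of_mem _ hv]
    have hop := ContinuousLinearMap.le_opNorm
      (drOperator U V - (proj (U ⊓ V) + proj (Uᗮ ⊓ Vᗮ))) u₀
    have hAnn : (0:ℝ) ≤ ‖drOperator U V - (proj (U ⊓ V) + proj (Uᗮ ⊓ Vᗮ))‖ := norm_nonneg _
    calc (inner ℝ u₀ v₀ : ℝ)
        = inner ℝ ((drOperator U V - (proj (U ⊓ V) + proj (Uᗮ ⊓ Vᗮ))) u₀) v₀ := by
          rw [hAu, h5]
      _ ≤ ‖(drOperator U V - (proj (U ⊓ V) + proj (Uᗮ ⊓ Vᗮ))) u₀‖ * ‖v₀‖ :=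
          real_inner_le_norm _ _
      _ ≤ ‖drOperator U V - (proj (U ⊓ V) + proj (Uᗮ ⊓ Vᗮ))‖ := by
          nlinarith [norm_nonneg u₀, norm_nonneg v₀, norm_nonneg
            ((drOperator U V - (proj (U ⊓ V) + proj (Uᗮ ⊓ Vᗮ))) u₀)]

lemma fix_mem_decomp {w : X} (hw : w ∈ fixedSpace (drOperator U V)) :
    proj U w ∈ U ⊓ V ∧ w - proj U w ∈ Uᗮ ⊓ Vᗮ := by
  have hTw : drOperator U V w = w := by
    have h := hw
    simp only [fixedSpace, LinearMap.mem_ker, ContinuousLinearMap.coe_sub', ContinuousLinearMap.coe_sub,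
      LinearMap.sub_apply, ContinuousLinearMap.coe_coe,
      Pi.sub_apply, ContinuousLinearMap.one_apply, sub_eq_zero] at h
    exact h
  rw [drOperator_eq] at hTw
  simp only [ContinuousLinearMap.add_apply, ContinuousLinearMap.mul_apply] at hTw
  rw [one_sub_proj U, one_sub_proj V] at hTw
  -- hTw : proj V (proj U w) + ((w - proj U w) - proj V (w - proj U w)) = w
  have heq1 : proj V (proj U w) - proj V (w - proj U w) = proj U w := by
    have h3 : proj V (proj U w) - proj V (w - proj U w) + (w - proj U w)
        = proj V (proj U w) + (w - proj U w - proj V (w - proj U w)) := by abel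
    rw [hTw] at h3
    have hw2 : proj U w + (w - proj U w) = w := by abel
    exact add_right_cancel (h3.trans hw2.symm)
  have hpV : proj V (proj U w) = proj U w := by
    have h4 := congrArg (proj V) heq1
    rw [map_sub, proj_proj, proj_proj] at h4
    rw [← h4]
    exact heq1
  have hqV : proj V (w - proj U w) = 0 := by
    have h6 := heq1
    rw [hpV] at h6
    exact sub_eq_self.mp h6
  constructor
  · exact ⟨proj_mem U w, by rw [← hpV]; exact proj_mem V _⟩
  · refine ⟨sub_proj_mem U w, ?_⟩
    have h7 := sub_proj_mem V (w - proj U w)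
    rwa [hqV, sub_zero] at h7
end assembly
section finalsec
variable (U V : Submodule ℝ X) [CompleteSpace U] [CompleteSpace V]

lemma proj_fixedSpace_eq :
    proj (fixedSpace (drOperator U V)) = proj (U ⊓ V) + proj (Uᗮ ⊓ Vᗮ) := by
  ext x
  have hmem : proj (U ⊓ V) x + proj (Uᗮ ⊓ Vᗮ) x ∈ fixedSpace (drOperator U V) := by
    simp only [fixedSpace, LinearMap.mem_ker, ContinuousLinearMap.coe_sub', ContinuousLinearMap.coe_sub,
      LinearMap.sub_apply, ContinuousLinearMap.coe_coe,
      Pi.sub_apply, ContinuousLinearMap.one_apply, sub_eq_zero]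
    have h := ContinuousLinearMap.ext_iff.mp (T_mul_P U V) x
    simpa only [ContinuousLinearMap.mul_apply, ContinuousLinearMap.add_apply] using h
  have horth : ∀ w ∈ fixedSpace (drOperator U V),
      (inner ℝ (x - (proj (U ⊓ V) x + proj (Uᗮ ⊓ Vᗮ) x)) w : ℝ) = 0 := by
    intro w hw
    obtain ⟨hp, hq⟩ := fix_mem_decomp U V hw
    have hwdec : w = proj U w + (w - proj U w) := by abel
    rw [hwdec, inner_add_right]
    have e1 : (inner ℝ (x - (proj (U ⊓ V) x + proj (Uᗮ ⊓ Vᗮ) x)) (proj U w) : ℝ) = 0 := by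
      rw [inner_sub_left, inner_add_left]
      have a1 : (inner ℝ (proj (U ⊓ V) x) (proj U w) : ℝ) = inner ℝ x (proj U w) := by
        rw [inner_proj_left, proj_of_mem _ hp]
      have a2 : (inner ℝ (proj (Uᗮ ⊓ Vᗮ) x) (proj U w) : ℝ) = 0 := by
        rw [inner_proj_left, proj_of_mem_orthogonal _ (W_le_W'o U V hp), inner_zero_right]
      rw [a1, a2]; ring
    have e2 : (inner ℝ (x - (proj (U ⊓ V) x + proj (Uᗮ ⊓ Vᗮ) x)) (w - proj U w) : ℝ) = 0 := by
      rw [inner_sub_left, inner_add_left]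
      have a1 : (inner ℝ (proj (Uᗮ ⊓ Vᗮ) x) (w - proj U w) : ℝ)
          = inner ℝ x (w - proj U w) := by
        rw [inner_proj_left, proj_of_mem _ hq]
      have a2 : (inner ℝ (proj (U ⊓ V) x) (w - proj U w) : ℝ) = 0 := by
        rw [inner_proj_left, proj_of_mem_orthogonal _ (W'_le_Wo U V hq), inner_zero_right]
      rw [a1, a2]; ring
    rw [e1, e2, add_zero]
  exact Submodule.eq_starProjection_of_mem_of_inner_eq_zero hmem horth

end finalsec
/-- `‖T^n − P_{Fix T}‖ = c_F^n` for every integer `n ≥ 1`. -/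
theorem norm_drOperator_pow_sub_proj_fixedSpace
    (U V : Submodule ℝ X) [CompleteSpace U] [CompleteSpace V] (n : ℕ) (hn : 1 ≤ n) :
    ‖(drOperator U V) ^ n - proj (fixedSpace (drOperator U V))‖ = friedrichs U V ^ n := by
  rw [proj_fixedSpace_eq, ← Apow_eq U V n hn,
    normal_norm_pow _ (A_normal U V) n hn, norm_A U V]
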